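/- For all positive integers m and n, the zero forcing number of the Hopi rectangle graph HD(m,n) equals m + n, i.e., Z(HD(m,n)) = m + n. -/

import Mathlib

/-- One round of the zero forcing color change rule, where vertices in the
leak set `L` are not permitted to force. A blue vertex `u ∉ L` with exactly one
non-blue neighbor `v` turns `v` blue. -/
def zfStep {V : Type*} (G : SimpleGraph V) (L : Set V) (B : Set V) : Set V :=
  B ∪ {v | ∃ u ∈ B, u ∉ L ∧ G.Adj u v ∧ ∀ w, G.Adj u w → w ∉ B → w = v}

/-- The set of vertices eventually colored blue starting from `B`, with leaks `L`. -/
def zfClosure {V : Type*} (G : SimpleGraph V) (L : Set V) (B : Set V) : Set V :=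
  ⋃ k, (zfStep G L)^[k] B

/-- `B` is an `ℓ`-leaky forcing set: for every leak set of size at most `ℓ`,
starting with exactly `B` blue, eventually every vertex becomes blue. -/
def IsLeakyForcingSet {V : Type*} (G : SimpleGraph V) (ℓ : ℕ) (B : Set V) : Prop :=
  ∀ L : Set V, L.ncard ≤ ℓ → zfClosure G L B = Set.univ

/-- `B` is a zero forcing set (no leaks). -/
def IsZeroForcingSet {V : Type*} (G : SimpleGraph V) (B : Set V) : Prop :=
  zfClosure G (∅ : Set V) B = Set.univ

/-- The zero forcing number `Z(G)`: minimum cardinality of a zero forcing set. -/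
noncomputable def zfNumber {V : Type*} (G : SimpleGraph V) : ℕ :=
  sInf (Set.ncard '' {B : Set V | IsZeroForcingSet G B})

/-- The `ℓ`-leaky forcing number `Z_(ℓ)(G)`: minimum cardinality of an
`ℓ`-leaky forcing set. -/
noncomputable def leakyNumber {V : Type*} (G : SimpleGraph V) (ℓ : ℕ) : ℕ :=
  sInf (Set.ncard '' {B : Set V | IsLeakyForcingSet G ℓ B})

/-- The vertex set of the Hopi rectangle graph of order `(m,n)`: the set of
integer lattice points `(i,j)` with `m-1 ≤ i+j ≤ 2n+m-1` and `|i-j| ≤ m`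
(realized as a `Finset` by filtering a sufficiently large box). -/
noncomputable def HDverts (m n : ℕ) : Finset (ℤ × ℤ) :=
  (Finset.Icc (-2 : ℤ) (2*n + 2*m) ×ˢ Finset.Icc (-2 : ℤ) (2*n + 2*m)).filter
    (fun p => (m : ℤ) - 1 ≤ p.1 + p.2 ∧ p.1 + p.2 ≤ 2*n + m - 1 ∧ |p.1 - p.2| ≤ m)

/-- The Hopi rectangle graph `HD(m,n)`: vertices are the points of `HDverts m n`,
and `(i,j)` is adjacent to `(i',j')` iff `|i - i'| + |j - j'| = 1`. -/
def HD (m n : ℕ) : SimpleGraph {p : ℤ × ℤ // p ∈ HDverts m n} where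
  Adj u v := |u.val.1 - v.val.1| + |u.val.2 - v.val.2| = 1
  symm := by
    constructor
    intro u v h
    rw [abs_sub_comm v.val.1 u.val.1, abs_sub_comm v.val.2 u.val.2]
    exact h
  loopless := by constructor; intro u h; simp at h


lemma mem_HDverts {m n : ℕ} {p : ℤ × ℤ} :
    p ∈ HDverts m n ↔ ((m:ℤ) - 1 ≤ p.1 + p.2 ∧ p.1 + p.2 ≤ 2*n + m - 1 ∧
      -(m:ℤ) ≤ p.1 - p.2 ∧ p.1 - p.2 ≤ m) := by
  simp only [HDverts, Finset.mem_filter, Finset.mem_product, Finset.mem_Icc, abs_le]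
  omega

lemma HD_adj_iff {m n : ℕ} {u v : {p : ℤ × ℤ // p ∈ HDverts m n}} :
    (HD m n).Adj u v ↔
      ((v.val.1 = u.val.1 + 1 ∧ v.val.2 = u.val.2) ∨
       (v.val.1 = u.val.1 - 1 ∧ v.val.2 = u.val.2) ∨
       (v.val.1 = u.val.1 ∧ v.val.2 = u.val.2 + 1) ∨
       (v.val.1 = u.val.1 ∧ v.val.2 = u.val.2 - 1)) := by
  show |u.val.1 - v.val.1| + |u.val.2 - v.val.2| = 1 ↔ _
  constructor
  · intro h
    rcases abs_cases (u.val.1 - v.val.1) with ⟨h1, h1'⟩ | ⟨h1, h1'⟩ <;>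
      rcases abs_cases (u.val.2 - v.val.2) with ⟨h2, h2'⟩ | ⟨h2, h2'⟩ <;> omega
  · intro h
    rcases abs_cases (u.val.1 - v.val.1) with ⟨h1, h1'⟩ | ⟨h1, h1'⟩ <;>
      rcases abs_cases (u.val.2 - v.val.2) with ⟨h2, h2'⟩ | ⟨h2, h2'⟩ <;> omega

def IsFort {V : Type*} (G : SimpleGraph V) (F : Set V) : Prop :=
  ∀ u ∉ F, ∀ v ∈ F, G.Adj u v → ∃ w ∈ F, w ≠ v ∧ G.Adj u w

lemma isFort_diag (m n : ℕ) (k : ℕ) (hk : k < m) :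
    IsFort (HD m n) {v | v.val.1 - v.val.2 = 2*(k:ℤ) - m + 1} := by
  intro u hu v hv hadj
  simp only [Set.mem_setOf_eq] at hu hv ⊢
  have hum := mem_HDverts.mp u.property
  rw [HD_adj_iff] at hadj
  have hklt : (k:ℤ) < m := by exact_mod_cast hk
  rcases hadj with ⟨h1, h2⟩ | ⟨h1, h2⟩ | ⟨h1, h2⟩ | ⟨h1, h2⟩
  · refine ⟨⟨(u.val.1, u.val.2 - 1), mem_HDverts.mpr (by constructor <;> omega)⟩,
      by simp; omega, ?_, ?_⟩
    · intro h; rw [Subtype.ext_iff, Prod.ext_iff] at h; simp at h; omega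
    · rw [HD_adj_iff]; right; right; right; exact ⟨rfl, rfl⟩
  · refine ⟨⟨(u.val.1, u.val.2 + 1), mem_HDverts.mpr (by constructor <;> omega)⟩,
      by simp; omega, ?_, ?_⟩
    · intro h; rw [Subtype.ext_iff, Prod.ext_iff] at h; simp at h; omega
    · rw [HD_adj_iff]; right; right; left; exact ⟨rfl, rfl⟩
  · refine ⟨⟨(u.val.1 - 1, u.val.2), mem_HDverts.mpr (by constructor <;> omega)⟩,
      by simp; omega, ?_, ?_⟩
    · intro h; rw [Subtype.ext_iff, Prod.ext_iff] at h; simp at h; omega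
    · rw [HD_adj_iff]; right; left; exact ⟨rfl, rfl⟩
  · refine ⟨⟨(u.val.1 + 1, u.val.2), mem_HDverts.mpr (by constructor <;> omega)⟩,
      by simp; omega, ?_, ?_⟩
    · intro h; rw [Subtype.ext_iff, Prod.ext_iff] at h; simp at h; omega
    · rw [HD_adj_iff]; left; exact ⟨rfl, rfl⟩

lemma isFort_row (m n : ℕ) (k : ℕ) (hkm : m ≤ k) (hk : k < m + n) :
    IsFort (HD m n) {v | v.val.1 + v.val.2 = 2*(k:ℤ) - m} := by
  intro u hu v hv hadj
  simp only [Set.mem_setOf_eq] at hu hv ⊢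
  have hum := mem_HDverts.mp u.property
  rw [HD_adj_iff] at hadj
  have hklt : (k:ℤ) < m + n := by exact_mod_cast hk
  have hkge : (m:ℤ) ≤ k := by exact_mod_cast hkm
  rcases hadj with ⟨h1, h2⟩ | ⟨h1, h2⟩ | ⟨h1, h2⟩ | ⟨h1, h2⟩
  · refine ⟨⟨(u.val.1, u.val.2 + 1), mem_HDverts.mpr (by constructor <;> omega)⟩,
      by simp; omega, ?_, ?_⟩
    · intro h; rw [Subtype.ext_iff, Prod.ext_iff] at h; simp at h; omega
    · rw [HD_adj_iff]; right; right; left; exact ⟨rfl, rfl⟩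
  · refine ⟨⟨(u.val.1, u.val.2 - 1), mem_HDverts.mpr (by constructor <;> omega)⟩,
      by simp; omega, ?_, ?_⟩
    · intro h; rw [Subtype.ext_iff, Prod.ext_iff] at h; simp at h; omega
    · rw [HD_adj_iff]; right; right; right; exact ⟨rfl, rfl⟩
  · refine ⟨⟨(u.val.1 + 1, u.val.2), mem_HDverts.mpr (by constructor <;> omega)⟩,
      by simp; omega, ?_, ?_⟩
    · intro h; rw [Subtype.ext_iff, Prod.ext_iff] at h; simp at h; omega
    · rw [HD_adj_iff]; left; exact ⟨rfl, rfl⟩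
  · refine ⟨⟨(u.val.1 - 1, u.val.2), mem_HDverts.mpr (by constructor <;> omega)⟩,
      by simp; omega, ?_, ?_⟩
    · intro h; rw [Subtype.ext_iff, Prod.ext_iff] at h; simp at h; omega
    · rw [HD_adj_iff]; right; left; exact ⟨rfl, rfl⟩

lemma fort_meets_zfs {V : Type*} (G : SimpleGraph V) {F B : Set V}
    (hF : IsFort G F) (hne : F.Nonempty) (hB : IsZeroForcingSet G B) :
    (B ∩ F).Nonempty := by
  rw [Set.nonempty_iff_ne_empty]
  intro hBF
  have key : ∀ k, (zfStep G (∅ : Set V))^[k] B ∩ F = ∅ := by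
    intro k
    induction k with
    | zero => simpa using hBF
    | succ k ih =>
      rw [Function.iterate_succ_apply']
      set C := (zfStep G (∅ : Set V))^[k] B with hC
      rw [Set.eq_empty_iff_forall_notMem] at ih ⊢
      rintro v ⟨hv, hvF⟩
      rcases hv with hv | ⟨u, huC, -, huv, hforce⟩
      · exact ih v ⟨hv, hvF⟩
      · have huF : u ∉ F := fun h => ih u ⟨huC, h⟩
        obtain ⟨w, hwF, hwv, huw⟩ := hF u huF v hvF huv
        have hwC : w ∉ C := fun h => ih w ⟨h, hwF⟩
        exact hwv (hforce w huw hwC)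
  obtain ⟨x, hx⟩ := hne
  have : x ∈ zfClosure G (∅ : Set V) B := by rw [hB]; trivial
  obtain ⟨S, ⟨k, rfl⟩, hxS⟩ := this
  exact Set.eq_empty_iff_forall_notMem.mp (key k) x ⟨hxS, hx⟩

def HDfort (m n : ℕ) (k : ℕ) : Set {p : ℤ × ℤ // p ∈ HDverts m n} :=
  if k < m then {v | v.val.1 - v.val.2 = 2*(k:ℤ) - m + 1}
  else {v | v.val.1 + v.val.2 = 2*(k:ℤ) - m}

lemma HDfort_isFort (m n : ℕ) (k : ℕ) (hk : k < m + n) :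
    IsFort (HD m n) (HDfort m n k) := by
  unfold HDfort
  by_cases h : k < m
  · simpa [h] using isFort_diag m n k h
  · simpa [h] using isFort_row m n k (by omega) hk

lemma HDfort_nonempty (m n : ℕ) (k : ℕ) (hk : k < m + n) :
    (HDfort m n k).Nonempty := by
  unfold HDfort
  by_cases h : k < m
  · have hkm : (k:ℤ) < m := by exact_mod_cast h
    refine ⟨⟨((k:ℤ), (m:ℤ) - 1 - k), mem_HDverts.mpr (by constructor <;> omega)⟩, ?_⟩
    simp [h]; omega
  · have hkm : (m:ℤ) ≤ k := by exact_mod_cast (Nat.le_of_not_lt h)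
    have hkmn : (k:ℤ) < m + n := by exact_mod_cast hk
    refine ⟨⟨((k:ℤ), (k:ℤ) - m), mem_HDverts.mpr (by constructor <;> omega)⟩, ?_⟩
    simp [h]; omega

lemma HDfort_inj (m n : ℕ) {i j : ℕ} (hi : i < m + n) (hj : j < m + n)
    {b : {p : ℤ × ℤ // p ∈ HDverts m n}} (hbi : b ∈ HDfort m n i)
    (hbj : b ∈ HDfort m n j) : i = j := by
  unfold HDfort at hbi hbj
  by_cases h1 : i < m <;> by_cases h2 : j < m <;>
    simp only [h1, h2, if_true, if_false, Set.mem_setOf_eq] at hbi hbj <;> omega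

lemma HD_lower (m n : ℕ) {B : Set {p : ℤ × ℤ // p ∈ HDverts m n}}
    (hB : IsZeroForcingSet (HD m n) B) : m + n ≤ B.ncard := by
  have hch : ∀ k, k < m + n → (B ∩ HDfort m n k).Nonempty := fun k hk =>
    fort_meets_zfs (HD m n) (HDfort_isFort m n k hk) (HDfort_nonempty m n k hk) hB
  rcases Nat.eq_zero_or_pos (m + n) with h0 | hpos
  · omega
  classical
  let f : ℕ → {p : ℤ × ℤ // p ∈ HDverts m n} := fun k =>
    if h : k < m + n then (hch k h).some else (hch 0 hpos).some
  apply Set.le_ncard_of_inj_on_range f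
  · intro i hi
    simp only [f, dif_pos hi]
    exact ((hch i hi).some_mem).1
  · intro i hi j hj hij
    simp only [f, dif_pos hi, dif_pos hj] at hij
    have h1 := ((hch i hi).some_mem).2
    have h2 := ((hch j hj).some_mem).2
    rw [hij] at h1
    exact HDfort_inj m n hi hj h1 h2

/-- The canonical zero forcing set: the union of the two "left" sides. -/
def HDbase (m n : ℕ) : Set {p : ℤ × ℤ // p ∈ HDverts m n} :=
  {v | v.val.1 + v.val.2 = (m:ℤ) - 1 ∨ v.val.1 - v.val.2 = -(m:ℤ)}

lemma HD_first_nonneg {m n : ℕ} (v : {p : ℤ × ℤ // p ∈ HDverts m n}) :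
    0 ≤ v.val.1 ∧ v.val.1 ≤ (m:ℤ) + n - 1 := by
  have := mem_HDverts.mp v.property
  omega

lemma HDbase_forces (m n : ℕ) : ∀ k : ℕ,
    {v : {p : ℤ × ℤ // p ∈ HDverts m n} | v.val.1 < (k:ℤ)} ∪ HDbase m n ⊆
      (zfStep (HD m n) (∅ : Set _))^[k] (HDbase m n) := by
  intro k
  induction k with
  | zero =>
    rintro v (hv | hv)
    · exact absurd (HD_first_nonneg v).1 (by simpa using hv)
    · exact hv
  | succ k ih =>
    rw [Function.iterate_succ_apply']
    set C := (zfStep (HD m n) (∅ : Set _))^[k] (HDbase m n) with hC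
    rintro v (hv | hv)
    · simp only [Set.mem_setOf_eq] at hv
      by_cases hvk : v.val.1 < (k:ℤ)
      · exact Set.subset_union_left (ih (Or.inl hvk))
      by_cases hvB : v ∈ HDbase m n
      · exact Set.subset_union_left (ih (Or.inr hvB))
      have hvm := mem_HDverts.mp v.property
      have hvB' : v.val.1 + v.val.2 ≠ (m:ℤ) - 1 ∧ v.val.1 - v.val.2 ≠ -(m:ℤ) := by
        constructor <;> (intro h; exact hvB (by first | exact Or.inl h | exact Or.inr h))
      have hv1 : v.val.1 = (k:ℤ) := by push_cast at hv ⊢; omega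
      refine Set.subset_union_right ?_
      refine ⟨⟨(v.val.1 - 1, v.val.2), mem_HDverts.mpr (by constructor <;> omega)⟩,
        ?_, Set.notMem_empty _, ?_, ?_⟩
      · exact ih (Or.inl (by simp only [Set.mem_setOf_eq]; omega))
      · rw [HD_adj_iff]; left; constructor <;> simp
      · intro w hw hwC
        rw [HD_adj_iff] at hw
        rcases hw with ⟨h1, h2⟩ | ⟨h1, h2⟩ | ⟨h1, h2⟩ | ⟨h1, h2⟩
        · apply Subtype.ext; apply Prod.ext <;> simp_all <;> omega
        all_goals
          exact absurd (ih (Or.inl (by simp only [Set.mem_setOf_eq] at *; omega))) hwC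
    · exact Set.subset_union_left (ih (Or.inr hv))

lemma HDbase_zfs (m n : ℕ) : IsZeroForcingSet (HD m n) (HDbase m n) := by
  rw [IsZeroForcingSet, Set.eq_univ_iff_forall]
  intro v
  rw [zfClosure, Set.mem_iUnion]
  refine ⟨m + n, HDbase_forces m n (m + n) (Or.inl ?_)⟩
  simp only [Set.mem_setOf_eq]
  have := HD_first_nonneg v
  push_cast
  omega

lemma HDbase_card_le (m n : ℕ) : (HDbase m n).ncard ≤ m + n := by
  classical
  let g : Fin (m + n) → {p : ℤ × ℤ // p ∈ HDverts m n} := fun k =>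
    if h : (k : ℕ) < m then
      ⟨((k:ℤ), (m:ℤ) - 1 - k), mem_HDverts.mpr (by
        have : ((k:ℕ):ℤ) < m := by exact_mod_cast h
        constructor <;> omega)⟩
    else
      ⟨((k:ℤ) - m, (k:ℤ)), mem_HDverts.mpr (by
        have h1 : ((k:ℕ):ℤ) < m + n := by exact_mod_cast k.isLt
        have h2 : (m:ℤ) ≤ (k:ℕ) := by exact_mod_cast Nat.le_of_not_lt h
        constructor <;> omega)⟩
  have hsub : HDbase m n ⊆ g '' Set.univ := by
    rintro v (hv | hv)
    · have hvm := mem_HDverts.mp v.property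
      have h1 : 0 ≤ v.val.1 ∧ v.val.1 ≤ (m:ℤ) - 1 := by omega
      refine ⟨⟨v.val.1.toNat, by omega⟩, Set.mem_univ _, ?_⟩
      have hlt : (v.val.1.toNat : ℕ) < m := by omega
      simp only [g, dif_pos hlt]
      apply Subtype.ext; apply Prod.ext <;> simp <;> omega
    · have hvm := mem_HDverts.mp v.property
      have h1 : 0 ≤ v.val.1 ∧ v.val.1 ≤ (n:ℤ) - 1 := by omega
      refine ⟨⟨(v.val.1 + m).toNat, by omega⟩, Set.mem_univ _, ?_⟩
      have hlt : ¬ ((v.val.1 + m).toNat < m) := by omega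
      simp only [g, dif_neg hlt]
      apply Subtype.ext; apply Prod.ext <;> simp <;> omega
  calc (HDbase m n).ncard ≤ (g '' Set.univ).ncard := Set.ncard_le_ncard hsub (Set.toFinite _)
    _ ≤ (Set.univ : Set (Fin (m + n))).ncard := Set.ncard_image_le (Set.toFinite _)
    _ = m + n := by simp [Set.ncard_univ]


/-- The zero forcing number of `HD(m,n)` is `m + n`. -/
theorem zfNumber_HD (m n : ℕ) (hm : 0 < m) (hn : 0 < n) :
    zfNumber (HD m n) = m + n := by
  have hcard : (HDbase m n).ncard = m + n :=
    le_antisymm (HDbase_card_le m n) (HD_lower m n (HDbase_zfs m n))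
  have hmem : m + n ∈ Set.ncard '' {B | IsZeroForcingSet (HD m n) B} :=
    ⟨HDbase m n, HDbase_zfs m n, hcard⟩
  refine le_antisymm (Nat.sInf_le hmem) (le_csInf ⟨_, hmem⟩ ?_)
  rintro b ⟨B, hB, rfl⟩
  exact HD_lower m n hB
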